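/- Let f : ℝ³ → ℝ be differentiable and let γ : ℝ → ℝ³ be a Lipschitz curve such that for every s ∈ [0,1] the point γ(s) is a critical point of f, i.e., the Fréchet derivative of f at γ(s) is zero. Then f(γ(1)) = f(γ(0)); that is, f is constant along the curve. -/

import Mathlib

/-- A differentiable function is constant along a Lipschitz curve of critical points. -/
theorem constant_along_lipschitz_critical_curve
    (f : EuclideanSpace ℝ (Fin 3) → ℝ) (hf : Differentiable ℝ f)
    (γ : ℝ → EuclideanSpace ℝ (Fin 3)) (K : NNReal) (hγ : LipschitzWith K γ)
    (hcrit : ∀ s ∈ Set.Icc (0 : ℝ) 1, fderiv ℝ f (γ s) = 0) :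
    f (γ 1) = f (γ 0) := by
  have key : ∀ s ∈ Set.Icc (0:ℝ) 1, HasDerivAt (fun t => f (γ t)) 0 s := by
    intro s hs
    have h1 : HasFDerivAt f (0 : EuclideanSpace ℝ (Fin 3) →L[ℝ] ℝ) (γ s) := by
      have := (hf (γ s)).hasFDerivAt
      rwa [hcrit s hs] at this
    rw [hasDerivAt_iff_isLittleO]
    have h2 := h1.isLittleO
    have h3 := h2.comp_tendsto (hγ.continuous.tendsto s)
    have h4 : (fun t => γ t - γ s) =O[nhds s] fun t => t - s := by
      refine Asymptotics.isBigO_iff.2 ⟨K, Filter.Eventually.of_forall fun t => ?_⟩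
      have := hγ.dist_le_mul t s
      simpa [dist_eq_norm] using this
    simpa [Function.comp_def] using h3.trans_isBigO h4
  have hcont : ContinuousOn (fun t => f (γ t)) (Set.Icc 0 1) :=
    fun s hs => ((key s hs).continuousAt).continuousWithinAt
  have hderiv : ∀ s ∈ Set.Ico (0:ℝ) 1,
      HasDerivWithinAt (fun t => f (γ t)) 0 (Set.Ici s) s := fun s hs =>
    ((key s (Set.Ico_subset_Icc_self hs)).hasDerivWithinAt)
  have := constant_of_has_deriv_right_zero hcont hderiv 1 (by norm_num)
  simpa using this
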